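/- Let R = {0,b₁}×⋯×{0,bₛ} ⊆ ℝˢ be a cuboid and let a be a positive real with a ≤ min{b₁,…,bₛ}. Then there exist a positive integer N and a configuration C(a) ⊆ ℝᴺ such that: (i) every colouring of C(a) (with arbitrarily many colours) admits either a monochromatic pair of points at distance a (a monochromatic copy of {0,a}) or a rainbow copy of R; and (ii) C(a) is Ramsey, i.e. for every positive integer r there exists n such that every r-colouring of ℝⁿ admits a monochromatic copy of C(a). -/

import Mathlib

/-- A copy of a configuration `C ⊆ ℝˢ` in `ℝⁿ`: the image of `C` under a
distance-preserving map `ℝˢ → ℝⁿ`. -/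
def IsCopy {s n : ℕ} (C : Set (EuclideanSpace ℝ (Fin s)))
    (X : Set (EuclideanSpace ℝ (Fin n))) : Prop :=
  ∃ f : EuclideanSpace ℝ (Fin s) → EuclideanSpace ℝ (Fin n), Isometry f ∧ X = f '' C

/-- A set `X` is monochromatic under a colouring `χ` if all its points receive
the same colour. -/
def Monochromatic {α κ : Type*} (χ : α → κ) (X : Set α) : Prop :=
  ∀ x ∈ X, ∀ y ∈ X, χ x = χ y

/-- A set `X` is rainbow under a colouring `χ` if all its points receive
pairwise distinct colours. -/
def RainbowSet {α κ : Type*} (χ : α → κ) (X : Set α) : Prop :=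
  Set.InjOn χ X

/-- The cuboid `{0, b 0} × ⋯ × {0, b (s-1)} ⊆ ℝˢ`. -/
def cuboid {s : ℕ} (b : Fin s → ℝ) : Set (EuclideanSpace ℝ (Fin s)) :=
  {x | ∀ i, x i = 0 ∨ x i = b i}

/-- A configuration is canonically Ramsey if some `ℝⁿ` admits, for every colouring
with arbitrarily many colours, a monochromatic or rainbow copy of it. -/
def CanonicallyRamsey {s : ℕ} (C : Set (EuclideanSpace ℝ (Fin s))) : Prop :=
  ∃ n : ℕ, 0 < n ∧ ∀ (κ : Type) (χ : EuclideanSpace ℝ (Fin n) → κ),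
    ∃ X : Set (EuclideanSpace ℝ (Fin n)), IsCopy C X ∧ (Monochromatic χ X ∨ RainbowSet χ X)

/-- A configuration is Ramsey if for every number of colours `r` there is `n` such
that every `r`-colouring of `ℝⁿ` admits a monochromatic copy of it. -/
def IsRamsey {s : ℕ} (C : Set (EuclideanSpace ℝ (Fin s))) : Prop :=
  ∀ r : ℕ, 0 < r → ∃ n : ℕ, ∀ χ : EuclideanSpace ℝ (Fin n) → Fin r,
    ∃ X : Set (EuclideanSpace ℝ (Fin n)), IsCopy C X ∧ Monochromatic χ X


open Finset

section Aux

lemma sum_sq_pair {M : ℕ} (k1 k2 : Fin M) (h : k1 ≠ k2) (A B : ℝ) :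
    ∑ k : Fin M, (if k = k1 then A else if k = k2 then B else 0)^2 = A^2 + B^2 := by
  have hpt : ∀ k : Fin M, (if k = k1 then A else if k = k2 then B else 0)^2
      = (if k = k1 then A^2 else 0) + (if k = k2 then B^2 else 0) := by
    intro k
    by_cases h1 : k = k1 <;> by_cases h2 : k = k2 <;>
      first
      | (exfalso; exact h (h1 ▸ h2 ▸ rfl))
      | simp [h1, h2, h, Ne.symm h]
  simp [hpt, Finset.sum_add_distrib]

/-- Product-of-simplices point. -/
noncomputable def sP {J : Type*} [Fintype J] {M : ℕ} (D : J → ℝ) (u : J → Fin M) :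
    EuclideanSpace ℝ (J × Fin M) :=
  WithLp.toLp 2 (fun p : J × Fin M => if p.2 = u p.1 then D p.1 / Real.sqrt 2 else 0)

lemma sq_div_sqrt_two (A : ℝ) : (A / Real.sqrt 2)^2 = A^2 / 2 := by
  rw [div_pow, Real.sq_sqrt (by norm_num : (0:ℝ) ≤ 2)]

lemma dist_sP_sq {J : Type*} [Fintype J] [DecidableEq J] {M : ℕ} (D : J → ℝ)
    (u u' : J → Fin M) :
    dist (sP D u) (sP D u') ^ 2
      = ∑ w ∈ Finset.univ.filter (fun w => u w ≠ u' w), D w ^ 2 := by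
  rw [EuclideanSpace.dist_eq, Real.sq_sqrt (by positivity)]
  rw [Fintype.sum_prod_type]
  have inner : ∀ w : J, ∑ k : Fin M, dist (sP D u (w, k)) (sP D u' (w, k)) ^ 2
      = if u w ≠ u' w then D w ^ 2 else 0 := by
    intro w
    by_cases hw : u w = u' w
    · simp [sP, hw]
    · have hfun : ∀ k : Fin M, dist (sP D u (w, k)) (sP D u' (w, k)) ^ 2
          = (if k = u w then D w / Real.sqrt 2 else
              if k = u' w then -(D w / Real.sqrt 2) else 0)^2 := by
        intro k
        rw [Real.dist_eq, sq_abs, sP, sP]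
        by_cases h1 : k = u w <;> by_cases h2 : k = u' w <;>
          first
          | (exfalso; exact hw (h1 ▸ h2 ▸ rfl))
          | (simp [h1, h2, hw, Ne.symm hw]; try ring)
      rw [Finset.sum_congr rfl (fun k _ => hfun k), sum_sq_pair _ _ hw,
        if_pos hw]
      rw [neg_pow, sq_div_sqrt_two]
      ring
  rw [Finset.sum_congr rfl (fun w _ => inner w), Finset.sum_ite, Finset.sum_const_zero]
  simp

lemma dist_sP_single {J : Type*} [Fintype J] [DecidableEq J] {M : ℕ} (D : J → ℝ)
    (u u' : J → Fin M) (w₀ : J) (hD : 0 ≤ D w₀) (hval : u w₀ ≠ u' w₀)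
    (hoth : ∀ w, w ≠ w₀ → u w = u' w) :
    dist (sP D u) (sP D u') = D w₀ := by
  have hfilter : Finset.univ.filter (fun w => u w ≠ u' w) = {w₀} := by
    ext w
    simp only [Finset.mem_filter, Finset.mem_univ, true_and, Finset.mem_singleton]
    constructor
    · intro hne
      by_contra hw
      exact hne (hoth w hw)
    · rintro rfl
      exact hval
  have h2 : dist (sP D u) (sP D u') ^ 2 = D w₀ ^ 2 := by
    rw [dist_sP_sq, hfilter, Finset.sum_singleton]
  calc dist (sP D u) (sP D u') = Real.sqrt (dist (sP D u) (sP D u') ^ 2) :=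
        (Real.sqrt_sq dist_nonneg).symm
    _ = Real.sqrt (D w₀ ^ 2) := by rw [h2]
    _ = D w₀ := Real.sqrt_sq hD

lemma pigeon {κ : Type*} [DecidableEq κ] (r k : ℕ) (F : Finset κ) (hF : F.card ≤ r)
    (v : Fin (r * k + 1) → κ) (hv : ∀ z, v z ∈ F) :
    ∃ c, ∃ h : Fin k → Fin (r * k + 1), Function.Injective h ∧ ∀ j, v (h j) = c := by
  have hcard : F.card * k < (Finset.univ : Finset (Fin (r * k + 1))).card := by
    simp only [Finset.card_univ, Fintype.card_fin]
    exact lt_of_le_of_lt (Nat.mul_le_mul_right k hF) (Nat.lt_succ_self _)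
  obtain ⟨c, hc, hlt⟩ := Finset.exists_lt_card_fiber_of_mul_lt_card_of_maps_to
    (fun z _ => hv z) hcard
  obtain ⟨t, hts, htcard⟩ := Finset.exists_subset_card_eq (le_of_lt hlt)
  refine ⟨c, fun j => t.orderEmbOfFin htcard j, fun j j' hjj' =>
    (t.orderEmbOfFin htcard).injective hjj', fun j => ?_⟩
  have := hts (t.orderEmbOfFin_mem htcard j)
  exact (Finset.mem_filter.mp this).2

lemma grid_fin (t : ℕ) : ∀ (r k : ℕ), 0 < r → 0 < k → ∃ M : ℕ, 0 < M ∧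
    ∀ (κ : Type) (F : Finset κ), F.card ≤ r →
    ∀ χ : (Fin t → Fin M) → κ, (∀ u, χ u ∈ F) →
    ∃ g : Fin t → Fin k → Fin M, (∀ w, Function.Injective (g w)) ∧
      ∃ c, ∀ u : Fin t → Fin k, χ (fun w => g w (u w)) = c := by
  induction t with
  | zero =>
    intro r k hr hk
    refine ⟨1, one_pos, fun κ F hF χ hχ =>
      ⟨fun w => w.elim0, fun w => w.elim0, χ (fun w => w.elim0), fun u => ?_⟩⟩
    congr 1
    funext w
    exact w.elim0
  | succ t ih =>
    intro r k hr hk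
    classical
    set L := r * k + 1 with hL
    obtain ⟨M₀, hM₀pos, hM₀⟩ := ih (r ^ L) k (pow_pos hr L) hk
    refine ⟨M₀ + L, by omega, fun κ F hF χ hχ => ?_⟩
    have hM₀le : M₀ ≤ M₀ + L := Nat.le_add_right _ _
    have hLle : L ≤ M₀ + L := Nat.le_add_left _ _
    set χ' : (Fin t → Fin M₀) → (Fin L → κ) := fun v z =>
      χ (Fin.snoc (fun w => Fin.castLE hM₀le (v w)) (Fin.castLE hLle z)) with hχ'def
    have hF' : ((Fintype.piFinset (fun _ : Fin L => F)).card : ℕ) ≤ r ^ L := by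
      rw [Fintype.card_piFinset]
      calc ∏ _z : Fin L, F.card ≤ ∏ _z : Fin L, r := Finset.prod_le_prod
            (fun _ _ => Nat.zero_le _) (fun _ _ => hF)
        _ = r ^ L := by simp [Finset.prod_const]
    obtain ⟨g', hg'inj, c', hc'⟩ := hM₀ (Fin L → κ) (Fintype.piFinset (fun _ => F)) hF' χ'
      (fun v => by
        rw [Fintype.mem_piFinset]
        intro z
        exact hχ _)
    have hc'mem : ∀ z, c' z ∈ F := by
      intro z
      have := hc' (fun _ => ⟨0, hk⟩)
      rw [← congrFun this z]
      exact hχ _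
    obtain ⟨c, h, hhinj, hh⟩ := pigeon r k F hF c' hc'mem
    refine ⟨Fin.snoc (fun w j => Fin.castLE hM₀le (g' w j)) (fun j => Fin.castLE hLle (h j)),
      ?_, c, ?_⟩
    · intro w
      refine Fin.lastCases ?_ ?_ w
      · simp only [Fin.snoc_last]
        exact fun j1 j2 e => hhinj (Fin.castLE_injective _ e)
      · intro w'
        simp only [Fin.snoc_castSucc]
        exact fun j1 j2 e => hg'inj w' (Fin.castLE_injective _ e)
    · intro u
      have key : (fun w => Fin.snoc (α := fun _ => Fin k → Fin (M₀ + L))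
            (fun w j => Fin.castLE hM₀le (g' w j)) (fun j => Fin.castLE hLle (h j)) w (u w))
          = Fin.snoc (fun w' => Fin.castLE hM₀le (g' w' (u w'.castSucc)))
              (Fin.castLE hLle (h (u (Fin.last t)))) := by
        funext w
        refine Fin.lastCases ?_ ?_ w
        · simp
        · intro w'
          simp
      rw [key]
      have hstep : χ (Fin.snoc (fun w' => Fin.castLE hM₀le (g' w' (u w'.castSucc)))
          (Fin.castLE hLle (h (u (Fin.last t)))))
          = χ' (fun w' => g' w' (u w'.castSucc)) (h (u (Fin.last t))) := rfl
      rw [hstep, congrFun (hc' (fun w' => u w'.castSucc)) (h (u (Fin.last t))), hh]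

lemma grid_fintype (J : Type) [Fintype J] (r k : ℕ) (hr : 0 < r) (hk : 0 < k) :
    ∃ M : ℕ, 0 < M ∧
    ∀ (κ : Type) (F : Finset κ), F.card ≤ r →
    ∀ χ : (J → Fin M) → κ, (∀ u, χ u ∈ F) →
    ∃ g : J → Fin k → Fin M, (∀ w, Function.Injective (g w)) ∧
      ∃ c, ∀ u : J → Fin k, χ (fun w => g w (u w)) = c := by
  obtain ⟨M, hMpos, hM⟩ := grid_fin (Fintype.card J) r k hr hk
  refine ⟨M, hMpos, fun κ F hF χ hχ => ?_⟩
  set e := Fintype.equivFin J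
  obtain ⟨gg, hgginj, c, hc⟩ := hM κ F hF (fun v => χ (fun w => v (e w))) (fun v => hχ _)
  refine ⟨fun w => gg (e w), fun w => hgginj (e w), c, fun u => ?_⟩
  have := hc (fun w' => u (e.symm w'))
  simpa using this

noncomputable def padMap {ι ι' : Type*} (j : ι → ι')
    (x : EuclideanSpace ℝ ι) : EuclideanSpace ℝ ι' :=
  WithLp.toLp 2 (Function.extend j x 0)

lemma padMap_isometry {ι ι' : Type*} [Fintype ι] [Fintype ι'] [DecidableEq ι'] (j : ι → ι')
    (hj : Function.Injective j) : Isometry (padMap (ι := ι) (ι' := ι') j) := by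
  refine Isometry.of_dist_eq fun x y => ?_
  rw [EuclideanSpace.dist_eq, EuclideanSpace.dist_eq]
  congr 1
  rw [← Finset.sum_subset (Finset.subset_univ (Finset.univ.image j))]
  · rw [Finset.sum_image (fun a _ b _ h => hj h)]
    refine Finset.sum_congr rfl fun i _ => ?_
    simp only [padMap, WithLp.ofLp_toLp]
    rw [hj.extend_apply, hj.extend_apply]
  · intro i' _ hi'
    have hnot : ¬∃ a, j a = i' := by
      intro ⟨a, ha⟩
      exact hi' (Finset.mem_image.mpr ⟨a, Finset.mem_univ a, ha⟩)
    simp only [padMap, WithLp.ofLp_toLp]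
    rw [Function.extend_apply' _ _ _ hnot, Function.extend_apply' _ _ _ hnot]
    simp

noncomputable def reindex {ι ι' : Type*} [Fintype ι] [Fintype ι'] (e : ι ≃ ι') :
    EuclideanSpace ℝ ι ≃ₗᵢ[ℝ] EuclideanSpace ℝ ι' :=
  LinearIsometryEquiv.piLpCongrLeft 2 ℝ ℝ e

end Aux

section Ramsey

lemma isRamsey_subset {N : ℕ} {C D : Set (EuclideanSpace ℝ (Fin N))} (h : C ⊆ D)
    (hD : IsRamsey D) : IsRamsey C := by
  intro r hr
  obtain ⟨n, hn⟩ := hD r hr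
  refine ⟨n, fun χ => ?_⟩
  obtain ⟨X, ⟨f, hf, rfl⟩, hmono⟩ := hn χ
  exact ⟨f '' C, ⟨f, hf, rfl⟩, fun x hx y hy =>
    hmono x (Set.image_mono h hx) y (Set.image_mono h hy)⟩

lemma isRamsey_simplexProd (J : Type) [Fintype J] (M : ℕ) (hM : 0 < M) (D : J → ℝ)
    (N : ℕ) (Φ : EuclideanSpace ℝ (J × Fin M) ≃ₗᵢ[ℝ] EuclideanSpace ℝ (Fin N)) :
    IsRamsey (Φ '' Set.range (sP D)) := by
  classical
  intro r hr
  obtain ⟨M', hM'pos, hM'⟩ := grid_fintype J r M hr hM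
  refine ⟨Fintype.card (J × Fin M'), fun χ => ?_⟩
  set Ψ := reindex (Fintype.equivFin (J × Fin M')) with hΨ
  obtain ⟨g, hginj, c, hc⟩ := hM' (Fin r) Finset.univ (by simp)
    (fun u => χ (Ψ (sP (M := M') D u))) (fun u => Finset.mem_univ _)
  set j : J × Fin M → J × Fin M' := fun p => (p.1, g p.1 p.2) with hj_def
  have hj : Function.Injective j := by
    rintro ⟨w, k⟩ ⟨w', k'⟩ hpq
    simp only [hj_def, Prod.mk.injEq] at hpq
    obtain ⟨rfl, h2⟩ := hpq
    exact Prod.ext rfl (hginj w h2)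
  have hkey : ∀ u : J → Fin M, padMap j (sP D u) = sP (M := M') D (fun w => g w (u w)) := by
    intro u
    rw [WithLp.ext_iff]
    funext p'
    obtain ⟨w, k'⟩ := p'
    by_cases hk' : ∃ k, g w k = k'
    · obtain ⟨k, rfl⟩ := hk'
      have : padMap j (sP D u) (j (w, k)) = sP D u (w, k) := hj.extend_apply _ _ _
      rw [hj_def] at this
      rw [this]
      simp only [sP]
      by_cases hku : k = u w
      · subst hku; simp
      · rw [if_neg hku, if_neg (fun hgk => hku (hginj w hgk))]
    · have hnot : ¬∃ p : J × Fin M, j p = (w, k') := by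
        rintro ⟨⟨w₀, k₀⟩, hp⟩
        have h1 : w₀ = w := congrArg Prod.fst hp
        subst h1
        exact hk' ⟨k₀, congrArg Prod.snd hp⟩
      rw [padMap, WithLp.ofLp_toLp, Function.extend_apply' _ _ _ hnot]
      simp only [sP]
      rw [if_neg (fun hcontr => hk' ⟨u w, hcontr.symm⟩)]
      rfl
  set f : EuclideanSpace ℝ (Fin N) → EuclideanSpace ℝ (Fin (Fintype.card (J × Fin M'))) :=
    fun x => Ψ (padMap j (Φ.symm x)) with hf_def
  have hf : Isometry f :=
    Ψ.isometry.comp ((padMap_isometry j hj).comp Φ.symm.isometry)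
  refine ⟨f '' (Φ '' Set.range (sP D)), ⟨f, hf, rfl⟩, ?_⟩
  rintro x ⟨x₀, ⟨y₀, ⟨u, rfl⟩, rfl⟩, rfl⟩ y ⟨x₁, ⟨y₁, ⟨u', rfl⟩, rfl⟩, rfl⟩
  have e1 : f (Φ (sP D u)) = Ψ (sP (M := M') D (fun w => g w (u w))) := by
    rw [hf_def]
    simp only [LinearIsometryEquiv.symm_apply_apply]
    rw [hkey]
  have e2 : f (Φ (sP D u')) = Ψ (sP (M := M') D (fun w => g w (u' w))) := by
    rw [hf_def]
    simp only [LinearIsometryEquiv.symm_apply_apply]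
    rw [hkey]
  rw [e1, e2, hc u, hc u']

end Ramsey
section Cub

variable {s m : ℕ}

noncomputable def Dside (a : ℝ) (b : Fin s → ℝ) : Fin s × Fin 2 → ℝ :=
  fun w => if w.2 = 0 then Real.sqrt (b w.1 ^ 2 - a ^ 2) else a

def kone (e : Fin s → Fin m) : Fin s × Fin 2 → Fin (m + 1) :=
  fun w => if w.2 = 0 then 1 else (e w.1).succ

def uA (e : Fin s → Fin m) (A : Finset (Fin s)) : Fin s × Fin 2 → Fin (m + 1) :=
  fun w => if w.1 ∈ A then kone e w else 0

lemma kone_ne_zero (hm : 0 < m) (e : Fin s → Fin m) (w : Fin s × Fin 2) :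
    kone e w ≠ 0 := by
  unfold kone
  split
  · intro h
    have h1 : (1 : Fin (m + 1)).val = (0 : Fin (m + 1)).val := congrArg Fin.val h
    rw [Fin.val_one', Fin.val_zero, Nat.mod_eq_of_lt (by omega)] at h1
    omega
  · exact Fin.succ_ne_zero _

lemma Dside_nonneg (a : ℝ) (ha : 0 ≤ a) (b : Fin s → ℝ) (w : Fin s × Fin 2) :
    0 ≤ Dside a b w := by
  unfold Dside
  split
  · exact Real.sqrt_nonneg _
  · exact ha

lemma Dside_one (a : ℝ) (b : Fin s → ℝ) (i : Fin s) : Dside a b (i, 1) = a := by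
  unfold Dside
  norm_num

noncomputable def cubMap (a : ℝ) (b : Fin s → ℝ) (e : Fin s → Fin m)
    (t : EuclideanSpace ℝ (Fin s)) : EuclideanSpace ℝ ((Fin s × Fin 2) × Fin (m + 1)) :=
  WithLp.toLp 2 (fun p : (Fin s × Fin 2) × Fin (m + 1) =>
    if p.2 = 0 then (1 - t p.1.1 / b p.1.1) * (Dside a b p.1 / Real.sqrt 2)
    else if p.2 = kone e p.1 then (t p.1.1 / b p.1.1) * (Dside a b p.1 / Real.sqrt 2) else 0)

end Cub
section Cub2

variable {s m : ℕ}

lemma cubMap_isometry (hm : 0 < m) (a : ℝ) (ha : 0 < a) (b : Fin s → ℝ)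
    (hb : ∀ i, 0 < b i) (hab : ∀ i, a ≤ b i) (e : Fin s → Fin m) :
    Isometry (cubMap (m := m) a b e) := by
  refine Isometry.of_dist_eq fun t t' => ?_
  rw [EuclideanSpace.dist_eq, EuclideanSpace.dist_eq]
  congr 1
  rw [Fintype.sum_prod_type]
  have inner : ∀ w : Fin s × Fin 2,
      ∑ k : Fin (m + 1), dist (cubMap a b e t (w, k)) (cubMap a b e t' (w, k)) ^ 2
      = ((t w.1 - t' w.1) / b w.1) ^ 2 * Dside a b w ^ 2 := by
    intro w
    have hfun : ∀ k : Fin (m + 1), dist (cubMap a b e t (w, k)) (cubMap a b e t' (w, k)) ^ 2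
        = (if k = 0 then -((t w.1 - t' w.1) / b w.1) * (Dside a b w / Real.sqrt 2)
           else if k = kone e w then ((t w.1 - t' w.1) / b w.1) * (Dside a b w / Real.sqrt 2)
           else 0) ^ 2 := by
      intro k
      rw [Real.dist_eq, sq_abs]
      simp only [cubMap]
      by_cases h0 : k = 0
      · rw [if_pos h0, if_pos h0, if_pos h0]
        ring
      · rw [if_neg h0, if_neg h0, if_neg h0]
        by_cases h1 : k = kone e w
        · rw [if_pos h1, if_pos h1, if_pos h1]
          ring
        · rw [if_neg h1, if_neg h1, if_neg h1]
          ring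
    rw [Finset.sum_congr rfl (fun k _ => hfun k),
      sum_sq_pair 0 (kone e w) (Ne.symm (kone_ne_zero hm e w)) _ _,
      mul_pow, mul_pow, neg_sq, sq_div_sqrt_two]
    ring
  rw [Finset.sum_congr rfl (fun w _ => inner w), Fintype.sum_prod_type]
  refine Finset.sum_congr rfl fun i _ => ?_
  rw [Fin.sum_univ_two]
  have h0 : Dside a b (i, 0) ^ 2 = b i ^ 2 - a ^ 2 := by
    show (if ((i, (0 : Fin 2)).2 = 0) then Real.sqrt (b i ^ 2 - a ^ 2) else a) ^ 2 = _
    rw [if_pos rfl, Real.sq_sqrt]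
    nlinarith [ha, hab i, hb i]
  have h1 : Dside a b (i, 1) ^ 2 = a ^ 2 := by rw [Dside_one]
  have hbne : b i ≠ 0 := (hb i).ne'
  rw [h0, h1, Real.dist_eq, sq_abs]
  show ((t i - t' i) / b i) ^ 2 * (b i ^ 2 - a ^ 2) + ((t i - t' i) / b i) ^ 2 * a ^ 2
      = (t i - t' i) ^ 2
  field_simp
  ring

lemma cubMap_eq_sP (hm : 0 < m) (a : ℝ) (b : Fin s → ℝ) (hb : ∀ i, 0 < b i) (e : Fin s → Fin m)
    (t : EuclideanSpace ℝ (Fin s)) (A : Finset (Fin s))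
    (hA1 : ∀ i, i ∈ A → t i = b i) (hA0 : ∀ i, i ∉ A → t i = 0) :
    cubMap a b e t = sP (Dside a b) (uA e A) := by
  rw [WithLp.ext_iff]
  funext p
  obtain ⟨w, k⟩ := p
  simp only [cubMap, sP, uA]
  by_cases hw : w.1 ∈ A
  · have hdiv : t w.1 / b w.1 = 1 := by rw [hA1 _ hw]; exact div_self (hb w.1).ne'
    rw [if_pos hw, hdiv]
    by_cases h0 : k = 0
    · subst h0
      rw [if_pos rfl, if_neg (Ne.symm (kone_ne_zero hm e w))]
      ring
    · rw [if_neg h0]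
      by_cases h1 : k = kone e w
      · rw [if_pos h1, if_pos h1]
        ring
      · rw [if_neg h1, if_neg h1]
  · have hdiv : t w.1 / b w.1 = 0 := by rw [hA0 _ hw]; simp
    rw [if_neg hw, hdiv]
    by_cases h0 : k = 0
    · rw [if_pos h0, if_pos h0]
      ring
    · rw [if_neg h0, if_neg h0]
      by_cases h1 : k = kone e w
      · rw [if_pos h1]
        ring
      · rw [if_neg h1]

end Cub2

/-- **Lemma 2 (existence of `C(a)`).** Let `R = {0,b₁} × ⋯ × {0,bₛ}` be a cuboid and
`0 < a ≤ min{b₁,…,bₛ}`. Then there is a finite configuration `C(a) ⊆ ℝᴺ` such that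
(i) every colouring of it admits a monochromatic pair of points at distance `a`
or a rainbow copy of `R`, and (ii) `C(a)` is Ramsey. -/
theorem exists_config_mono_dist_or_rainbow_cuboid (s : ℕ) (hs : 0 < s)
    (b : Fin s → ℝ) (hb : ∀ i, 0 < b i) (a : ℝ) (ha : 0 < a)
    (hab : ∀ i, a ≤ b i) :
    ∃ N : ℕ, 0 < N ∧ ∃ C : Set (EuclideanSpace ℝ (Fin N)), C.Finite ∧
      (∀ (κ : Type) (χ : EuclideanSpace ℝ (Fin N) → κ),
        (∃ x ∈ C, ∃ y ∈ C, dist x y = a ∧ χ x = χ y) ∨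
        (∃ X : Set (EuclideanSpace ℝ (Fin N)), X ⊆ C ∧ IsCopy (cuboid b) X ∧
          RainbowSet χ X)) ∧
      IsRamsey C := by
  classical
  set m := 4 ^ s + 1 with hm_def
  have hm : 0 < m := by positivity
  set N := Fintype.card ((Fin s × Fin 2) × Fin (m + 1)) with hN_def
  have hN : 0 < N := @Fintype.card_pos _ _ ⟨((⟨0, hs⟩, 0), 0)⟩
  set Φ : EuclideanSpace ℝ ((Fin s × Fin 2) × Fin (m + 1)) ≃ₗᵢ[ℝ] EuclideanSpace ℝ (Fin N) :=
    reindex (Fintype.equivFin ((Fin s × Fin 2) × Fin (m + 1))) with hΦ_def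
  set D : Fin s × Fin 2 → ℝ := Dside a b with hD_def
  set C : Set (EuclideanSpace ℝ (Fin N)) :=
    Φ '' {x | ∃ (e : Fin s → Fin m) (A : Finset (Fin s)), x = sP D (uA e A)} with hC_def
  have hCsub : C ⊆ Φ '' Set.range (sP D) := by
    apply Set.image_mono
    rintro x ⟨e, A, rfl⟩
    exact ⟨_, rfl⟩
  have hCfin : C.Finite := by
    refine Set.Finite.subset ?_ hCsub
    exact ((Set.finite_range (sP D)).image Φ)
  have hCmem : ∀ (e : Fin s → Fin m) (A : Finset (Fin s)), Φ (sP D (uA e A)) ∈ C :=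
    fun e A => Set.mem_image_of_mem Φ ⟨e, A, rfl⟩
  refine ⟨N, hN, C, hCfin, ?_, ?_⟩
  · -- part (i)
    intro κ χ
    by_cases hmono : ∃ x ∈ C, ∃ y ∈ C, dist x y = a ∧ χ x = χ y
    · exact Or.inl hmono
    · right
      push_neg at hmono
      -- Claim: forced distinct colours
      have hC1 : ∀ (A B : Finset (Fin s)) (i : Fin s), i ∈ A → i ∉ B →
          ∀ (e e' : Fin s → Fin m), (∀ j, j ≠ i → e j = e' j) →
          χ (Φ (sP D (uA e A))) = χ (Φ (sP D (uA e B))) →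
          χ (Φ (sP D (uA e' A))) = χ (Φ (sP D (uA e' B))) →
          e i = e' i := by
        intro A B i hiA hiB e e' hoff h1 h2
        by_contra hne
        have hBeq : uA e B = uA e' B := by
          funext w
          simp only [uA, kone]
          by_cases hw : w.1 ∈ B
          · rw [if_pos hw, if_pos hw]
            by_cases hw2 : w.2 = 0
            · rw [if_pos hw2, if_pos hw2]
            · rw [if_neg hw2, if_neg hw2, hoff w.1 (fun h => hiB (h ▸ hw))]
          · rw [if_neg hw, if_neg hw]
        have hval : uA e A (i, 1) ≠ uA e' A (i, 1) := by
          simp only [uA, kone]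
          rw [if_pos hiA, if_pos hiA, if_neg (by norm_num : ¬((i, (1 : Fin 2)).2 = 0)),
            if_neg (by norm_num : ¬((i, (1 : Fin 2)).2 = 0))]
          exact fun h => hne (Fin.succ_injective _ h)
        have hoth : ∀ w, w ≠ ((i, 1) : Fin s × Fin 2) → uA e A w = uA e' A w := by
          rintro ⟨j, ε⟩ hw
          by_cases hε : ε = 0
          · subst hε
            simp [uA, kone]
          · have hε1 : ε = 1 := Fin.eq_one_of_ne_zero ε hε
            subst hε1
            have hji : j ≠ i := fun h => hw (by rw [h])
            simp only [uA, kone, hoff j hji]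
        have hdist : dist (Φ (sP D (uA e A))) (Φ (sP D (uA e' A))) = a := by
          rw [Φ.dist_map]
          rw [dist_sP_single D _ _ (i, 1) (Dside_nonneg a ha.le b _) hval hoth]
          exact Dside_one a b i
        have hceq : χ (Φ (sP D (uA e A))) = χ (Φ (sP D (uA e' A))) := by
          rw [h1, hBeq, ← h2]
        exact hmono _ (hCmem e A) _ (hCmem e' A) hdist hceq
      -- counting
      have hBadP : ∀ (A B : Finset (Fin s)),
          (Finset.univ.filter (fun e : Fin s → Fin m => A ≠ B ∧
            χ (Φ (sP D (uA e A))) = χ (Φ (sP D (uA e B))))).card ≤ m ^ (s - 1) := by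
        intro A B
        by_cases hAB : A = B
        · rw [Finset.filter_false_of_mem (fun e _ => by simp [hAB])]
          simp
        · have hex : ∃ i, (i ∈ A ∧ i ∉ B) ∨ (i ∈ B ∧ i ∉ A) := by
            by_contra hno
            push_neg at hno
            exact hAB (Finset.ext fun i => ⟨fun h => (hno i).1 h, fun h => (hno i).2 h⟩)
          obtain ⟨i, hi⟩ := hex
          have hinj : Set.InjOn (fun (e : Fin s → Fin m) => (fun j : {j : Fin s // j ≠ i} => e j.1))
              ↑(Finset.univ.filter (fun e : Fin s → Fin m => A ≠ B ∧
                χ (Φ (sP D (uA e A))) = χ (Φ (sP D (uA e B))))) := by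
            intro e he e' he' heq
            simp only [Finset.coe_filter, Set.mem_setOf_eq] at he he'
            have hoff : ∀ j, j ≠ i → e j = e' j := fun j hj => congrFun heq ⟨j, hj⟩
            have hii : e i = e' i := by
              rcases hi with ⟨h1, h2⟩ | ⟨h1, h2⟩
              · exact hC1 A B i h1 h2 e e' hoff he.2.2 he'.2.2
              · exact hC1 B A i h1 h2 e e' hoff he.2.2.symm he'.2.2.symm
            funext j
            by_cases hj : j = i
            · rw [hj]; exact hii
            · exact hoff j hj
          calc (Finset.univ.filter (fun e : Fin s → Fin m => A ≠ B ∧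
                χ (Φ (sP D (uA e A))) = χ (Φ (sP D (uA e B))))).card
              ≤ (Finset.univ : Finset ({j : Fin s // j ≠ i} → Fin m)).card :=
                Finset.card_le_card_of_injOn _ (fun e _ => Finset.mem_univ _) hinj
            _ = m ^ (s - 1) := by
                rw [Finset.card_univ, Fintype.card_fun, Fintype.card_fin]
                congr 1
                rw [Fintype.card_subtype_compl, Fintype.card_subtype_eq, Fintype.card_fin]
      set Bad : Finset (Fin s → Fin m) := Finset.univ.filter (fun e => ∃ A B : Finset (Fin s),
        A ≠ B ∧ χ (Φ (sP D (uA e A))) = χ (Φ (sP D (uA e B)))) with hBad_def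
      have hcardBad : Bad.card < m ^ s := by
        have hsub : Bad ⊆ Finset.univ.biUnion (fun p : Finset (Fin s) × Finset (Fin s) =>
            Finset.univ.filter (fun e : Fin s → Fin m => p.1 ≠ p.2 ∧
              χ (Φ (sP D (uA e p.1))) = χ (Φ (sP D (uA e p.2))))) := by
          intro e he
          rw [hBad_def, Finset.mem_filter] at he
          obtain ⟨-, A, B, hAB, hcc⟩ := he
          exact Finset.mem_biUnion.mpr ⟨(A, B), Finset.mem_univ _,
            Finset.mem_filter.mpr ⟨Finset.mem_univ _, hAB, hcc⟩⟩
        have h4 : 2 ^ s * 2 ^ s < m := by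
          rw [hm_def, ← mul_pow]
          norm_num
        have hs1 : s - 1 + 1 = s := Nat.succ_pred_eq_of_pos hs
        calc Bad.card ≤ (Finset.univ.biUnion (fun p : Finset (Fin s) × Finset (Fin s) =>
              Finset.univ.filter (fun e : Fin s → Fin m => p.1 ≠ p.2 ∧
                χ (Φ (sP D (uA e p.1))) = χ (Φ (sP D (uA e p.2)))))).card :=
              Finset.card_le_card hsub
          _ ≤ ∑ p : Finset (Fin s) × Finset (Fin s),
              (Finset.univ.filter (fun e : Fin s → Fin m => p.1 ≠ p.2 ∧
                χ (Φ (sP D (uA e p.1))) = χ (Φ (sP D (uA e p.2))))).card :=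
              Finset.card_biUnion_le
          _ ≤ ∑ _p : Finset (Fin s) × Finset (Fin s), m ^ (s - 1) :=
              Finset.sum_le_sum (fun p _ => hBadP p.1 p.2)
          _ = (2 ^ s * 2 ^ s) * m ^ (s - 1) := by
              rw [Finset.sum_const, Finset.card_univ, Fintype.card_prod, Fintype.card_finset,
                Fintype.card_fin, smul_eq_mul]
          _ < m * m ^ (s - 1) := mul_lt_mul_of_pos_right h4 (pow_pos hm _)
          _ = m ^ s := by rw [← pow_succ', hs1]
      obtain ⟨e, he⟩ : ∃ e, e ∉ Bad := by
        by_contra hall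
        push_neg at hall
        have := Finset.eq_univ_iff_forall.mpr hall
        rw [this, Finset.card_univ, Fintype.card_fun, Fintype.card_fin, Fintype.card_fin]
          at hcardBad
        exact lt_irrefl _ hcardBad
      have hgood : ∀ A B : Finset (Fin s), A ≠ B →
          χ (Φ (sP D (uA e A))) ≠ χ (Φ (sP D (uA e B))) := by
        intro A B hAB hcc
        exact he (Finset.mem_filter.mpr ⟨Finset.mem_univ _, A, B, hAB, hcc⟩)
      -- the rainbow copy
      have hfIso : Isometry (fun t => Φ (cubMap (m := m) a b e t)) :=
        Φ.isometry.comp (cubMap_isometry hm a ha b hb hab e)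
      have hkey : ∀ t ∈ cuboid b, cubMap (m := m) a b e t
          = sP D (uA e (Finset.univ.filter (fun i => t i = b i))) := by
        intro t ht
        refine cubMap_eq_sP hm a b hb e t _ ?_ ?_
        · intro i hi
          exact (Finset.mem_filter.mp hi).2
        · intro i hi
          rcases ht i with h | h
          · exact h
          · exact absurd (Finset.mem_filter.mpr ⟨Finset.mem_univ i, h⟩) hi
      refine ⟨(fun t => Φ (cubMap (m := m) a b e t)) '' cuboid b, ?_,
        ⟨_, hfIso, rfl⟩, ?_⟩
      · rintro x ⟨t, ht, rfl⟩
        show Φ (cubMap (m := m) a b e t) ∈ C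
        rw [hkey t ht]
        exact hCmem e _
      · rintro x ⟨t, ht, rfl⟩ y ⟨t', ht', rfl⟩ hxy
        have hxy' : χ (Φ (cubMap (m := m) a b e t)) = χ (Φ (cubMap (m := m) a b e t')) := hxy
        show Φ (cubMap (m := m) a b e t) = Φ (cubMap (m := m) a b e t')
        rw [hkey t ht, hkey t' ht'] at hxy' ⊢
        by_cases hAA : (Finset.univ.filter (fun i => t i = b i))
            = (Finset.univ.filter (fun i => t' i = b i))
        · rw [hAA]
        · exact absurd hxy' (hgood _ _ hAA)
  · -- part (ii): Ramsey
    exact isRamsey_subset hCsub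
      (isRamsey_simplexProd (Fin s × Fin 2) (m + 1) (by omega) D N Φ)
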